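/- Let V be a finite type with at least two elements and let G be a connected simple graph on V. Let P be the V × V real matrix with P(x,y) = 1/deg(x) if x and y are adjacent in G and P(x,y) = 0 otherwise, and let Q = P − I. Let f : V → ℝ satisfy Σ_{x ∈ V} deg(x) · f(x) = 0. Then for each x ∈ V the function t ↦ (exp(tQ) f)(x) is integrable on [0,∞), and the function g : V → ℝ defined by g(x) = ∫₀^∞ (exp(tQ) f)(x) dt satisfies, for every x ∈ V, g(x) − (1/deg(x)) Σ_{y ∼ x} g(y) = f(x); that is, the discrete Laplacian of g equals f. -/

import Mathlib

open Matrix MeasureTheory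

attribute [local instance] Matrix.linftyOpNormedAddCommGroup Matrix.linftyOpNonUnitalNormedRing
  Matrix.linftyOpNormedRing Matrix.linftyOpNormedAlgebra

lemma exp_mulVec_eigen {V : Type*} [Fintype V] [DecidableEq V]
    (M : Matrix V V ℝ) (v : V → ℝ) (μ : ℝ) (h : M.mulVec v = μ • v) :
    (NormedSpace.exp M).mulVec v = Real.exp μ • v := by
  have hpow : ∀ n : ℕ, (M ^ n).mulVec v = (μ ^ n) • v := by
    intro n
    induction n with
    | zero => simp [Matrix.one_mulVec]
    | succ n ih =>
      rw [pow_succ, ← Matrix.mulVec_mulVec, h, Matrix.mulVec_smul, ih, smul_smul, pow_succ,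
        mul_comm]
  let L : Matrix V V ℝ →ₗ[ℝ] (V → ℝ) :=
    { toFun := fun A => A.mulVec v
      map_add' := fun A B => Matrix.add_mulVec A B v
      map_smul' := fun c A => Matrix.smul_mulVec c A v }
  have hLcont : Continuous L := L.continuous_of_finiteDimensional
  have hsum : Summable (fun n : ℕ => ((Nat.factorial n : ℝ))⁻¹ • M ^ n) :=
    NormedSpace.expSeries_summable' M
  have hmap : (NormedSpace.exp M).mulVec v
      = ∑' n : ℕ, ((Nat.factorial n : ℝ))⁻¹ • ((M ^ n).mulVec v) := by
    rw [NormedSpace.exp_eq_tsum ℝ]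
    have := (hsum.hasSum.map L hLcont).tsum_eq
    simp only [Function.comp_def, _root_.map_smul] at this
    exact this.symm
  have hsc : Summable (fun n : ℕ => ((Nat.factorial n : ℝ))⁻¹ * μ ^ n) := by
    simpa [smul_eq_mul] using NormedSpace.expSeries_summable' (𝕂 := ℝ) μ
  rw [hmap]
  have : ∀ n : ℕ, ((Nat.factorial n : ℝ))⁻¹ • ((M ^ n).mulVec v)
      = (((Nat.factorial n : ℝ))⁻¹ * μ ^ n) • v := by
    intro n; rw [hpow n, smul_smul]
  rw [tsum_congr this, hsc.tsum_smul_const]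
  congr 1
  rw [Real.exp_eq_exp_ℝ, NormedSpace.exp_eq_tsum ℝ]
  simp [smul_eq_mul]

/-- On a finite connected simple graph, the occupation-time Green function of the
continuous-time simple random walk, integrated against a function `f` of zero mean
with respect to the degree measure, has discrete Laplacian equal to `f`. -/
theorem discrete_green_function_laplacian
    (V : Type*) [Fintype V] [DecidableEq V] (hcard : 1 < Fintype.card V)
    (G : SimpleGraph V) [DecidableRel G.Adj] (hconn : G.Connected)
    (P : Matrix V V ℝ)
    (hP : ∀ x y : V, P x y = if G.Adj x y then (1 : ℝ) / (G.degree x) else 0)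
    (Q : Matrix V V ℝ) (hQ : Q = P - 1)
    (f : V → ℝ) (hf : ∑ x : V, (G.degree x : ℝ) * f x = 0)
    (g : V → ℝ)
    (hg : ∀ x : V, g x = ∫ t in Set.Ici (0 : ℝ), ((NormedSpace.exp (t • Q)).mulVec f) x) :
    (∀ x : V, IntegrableOn (fun t : ℝ => ((NormedSpace.exp (t • Q)).mulVec f) x)
        (Set.Ici (0 : ℝ)) volume) ∧
    ∀ x : V, g x - (1 / (G.degree x : ℝ)) * ∑ y ∈ G.neighborFinset x, g y = f x := by
  classical
  -- degrees are positive
  have hadj : ∀ x : V, ∃ y, G.Adj x y := by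
    intro x
    obtain ⟨y, hy⟩ := Fintype.exists_ne_of_one_lt_card hcard x
    obtain ⟨p⟩ := hconn.preconnected x y
    cases p with
    | nil => exact absurd rfl hy
    | cons h p => exact ⟨_, h⟩
  have hdegpos : ∀ x : V, 0 < (G.degree x : ℝ) := by
    intro x
    exact_mod_cast (G.degree_pos_iff_exists_adj x).2 (hadj x)
  set d : V → ℝ := fun x => (G.degree x : ℝ) with hd
  set s : V → ℝ := fun x => Real.sqrt (d x) with hsdef
  have hs : ∀ x, 0 < s x := fun x => Real.sqrt_pos.2 (hdegpos x)
  have hss : ∀ x, s x * s x = d x := fun x => Real.mul_self_sqrt (hdegpos x).le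
  set Dh : Matrix V V ℝ := diagonal s with hDh
  set Di : Matrix V V ℝ := diagonal (fun x => (s x)⁻¹) with hDi
  have hDiDh : Di * Dh = 1 := by
    rw [hDi, hDh, diagonal_mul_diagonal,
      show (fun x => (s x)⁻¹ * s x) = fun _ => (1 : ℝ) from
        funext fun x => inv_mul_cancel₀ (hs x).ne', diagonal_one]
  have hDhDi : Dh * Di = 1 := by
    rw [hDh, hDi, diagonal_mul_diagonal,
      show (fun x => s x * (s x)⁻¹) = fun _ => (1 : ℝ) from
        funext fun x => mul_inv_cancel₀ (hs x).ne', diagonal_one]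
  -- row sums of P are 1
  have hrow : ∀ x, ∑ y, P x y = 1 := by
    intro x
    have h1 : ∑ y, P x y = ∑ y ∈ G.neighborFinset x, (1 : ℝ) / d x := by
      rw [Finset.sum_congr rfl (fun y _ => hP x y),
        SimpleGraph.neighborFinset_eq_filter, Finset.sum_filter]
    rw [h1, Finset.sum_const, nsmul_eq_mul]
    rw [show ((G.neighborFinset x).card : ℝ) = d x from rfl]
    field_simp
    exact div_self (hdegpos x).ne'
  -- the symmetrized matrix
  set B : Matrix V V ℝ := Dh * Q * Di with hBdef
  have hQDi : Q * Di = Di * B := by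
    rw [hBdef, ← mul_assoc, ← mul_assoc, hDiDh, one_mul]
  have hBent : ∀ x y, B x y
      = (if G.Adj x y then (s x * s y)⁻¹ else 0) - (if x = y then 1 else 0) := by
    intro x y
    rw [hBdef]
    simp only [hDi, Matrix.mul_diagonal, hDh, Matrix.diagonal_mul, hQ, Matrix.sub_apply,
      Matrix.one_apply, hP]
    rcases eq_or_ne x y with rfl | hxy
    · simp [G.irrefl]
      exact mul_inv_cancel₀ (hs x).ne'
    · by_cases hadj' : G.Adj x y
      · have hne := G.ne_of_adj hadj'
        simp only [hadj', if_true, if_neg hxy]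
        rw [sub_zero, sub_zero, show (G.degree x : ℝ) = d x from rfl, ← hss x]
        field_simp
      · simp [hadj', hxy]
  have hherm : B.IsHermitian := by
    refine Matrix.IsHermitian.ext fun x y => ?_
    rw [star_trivial, hBent y x, hBent x y]
    congr 1
    · rw [if_congr (G.adj_comm y x) (by rw [mul_comm]) rfl]
    · rw [if_congr eq_comm rfl rfl]
  set μ : V → ℝ := hherm.eigenvalues with hμ
  set v : V → V → ℝ := fun i => ⇑(hherm.eigenvectorBasis i) with hv
  have hBv : ∀ i, B.mulVec (v i) = μ i • v i := fun i => hherm.mulVec_eigenvectorBasis i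
  set w : V → V → ℝ := fun i => Di.mulVec (v i) with hw
  have hvw : ∀ i, Dh.mulVec (w i) = v i := by
    intro i
    rw [hw, Matrix.mulVec_mulVec, hDhDi, Matrix.one_mulVec]
  have hQw : ∀ i, Q.mulVec (w i) = μ i • w i := by
    intro i
    rw [hw, Matrix.mulVec_mulVec, hQDi, ← Matrix.mulVec_mulVec, hBv, Matrix.mulVec_smul]
  have hPw : ∀ i, P.mulVec (w i) = (μ i + 1) • w i := by
    intro i
    have h0 := hQw i
    rw [hQ, Matrix.sub_mulVec, Matrix.one_mulVec, sub_eq_iff_eq_add] at h0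
    rw [h0, add_smul, one_smul]
  have hw0 : ∀ i, w i ≠ 0 := by
    intro i hwi
    have hvz : v i = 0 := by rw [← hvw i, hwi, Matrix.mulVec_zero]
    exact hherm.eigenvectorBasis.orthonormal.ne_zero i (by ext x; exact congrFun hvz x)
  -- eigenvalues are nonpositive
  have : Nonempty V := Fintype.card_pos_iff.mp (by omega)
  have hμle : ∀ i, μ i ≤ 0 := by
    intro i
    obtain ⟨x₀, -, hx₀⟩ := Finset.exists_max_image Finset.univ (fun x => |w i x|)
      ⟨Classical.arbitrary V, Finset.mem_univ _⟩
    have hx₀pos : 0 < |w i x₀| := by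
      rcases Function.ne_iff.1 (hw0 i) with ⟨z, hz⟩
      exact lt_of_lt_of_le (abs_pos.2 hz) (hx₀ z (Finset.mem_univ z))
    have hkey : |μ i + 1| * |w i x₀| ≤ |w i x₀| := by
      have h1 : (μ i + 1) * w i x₀ = ∑ y, P x₀ y * w i y := by
        have := congrFun (hPw i) x₀
        simpa [Matrix.mulVec, dotProduct, Pi.smul_apply, smul_eq_mul] using this.symm
      calc |μ i + 1| * |w i x₀| = |∑ y, P x₀ y * w i y| := by rw [← abs_mul, h1]
        _ ≤ ∑ y, |P x₀ y * w i y| := Finset.abs_sum_le_sum_abs _ _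
        _ ≤ ∑ y, P x₀ y * |w i x₀| := by
            refine Finset.sum_le_sum fun y _ => ?_
            rw [abs_mul]
            have hP0 : 0 ≤ P x₀ y := by
              rw [hP]; split <;> positivity
            rw [abs_of_nonneg hP0]
            exact mul_le_mul_of_nonneg_left (hx₀ y (Finset.mem_univ y)) hP0
        _ = |w i x₀| := by rw [← Finset.sum_mul, hrow, one_mul]
    have habs : |μ i + 1| ≤ 1 := le_of_mul_le_mul_right (by simpa using hkey) hx₀pos
    linarith [abs_le.1 habs |>.2]
  -- coefficients
  set uE : EuclideanSpace ℝ V := (WithLp.equiv 2 (V → ℝ)).symm (Dh.mulVec f) with huE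
  set c : V → ℝ := fun i => hherm.eigenvectorBasis.repr uE i with hc
  -- decomposition of f
  have hsumv : ∀ z, ∑ i, c i * v i z = (Dh.mulVec f) z := by
    intro z
    have h0 : (∑ i, c i • hherm.eigenvectorBasis i) = uE := by
      simp only [hc]
      exact hherm.eigenvectorBasis.sum_repr uE
    have h1 : (∑ i, c i • hherm.eigenvectorBasis i) z = (Dh.mulVec f) z := by
      rw [h0]; rfl
    rw [← h1]
    rw [WithLp.ofLp_sum, Finset.sum_apply]
    exact Finset.sum_congr rfl fun i _ => by simp [hv, smul_eq_mul]
  have hfd : ∀ x, f x = ∑ i, c i * w i x := by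
    intro x
    have hfD : f x = (Di.mulVec (Dh.mulVec f)) x := by
      rw [Matrix.mulVec_mulVec, hDiDh, Matrix.one_mulVec]
    rw [hfD, hDi, Matrix.mulVec_diagonal, ← hsumv x, Finset.mul_sum]
    refine Finset.sum_congr rfl fun i _ => ?_
    have hwx : w i x = (s x)⁻¹ * v i x :=
      Matrix.mulVec_diagonal (fun z => (s z)⁻¹) (v i) x
    rw [hwx]
    ring
  -- zero eigenvalue implies zero coefficient
  have hc0 : ∀ i, μ i = 0 → c i = 0 := by
    intro i h0
    have hPwi : P.mulVec (w i) = w i := by rw [hPw i, h0, zero_add, one_smul]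
    obtain ⟨x₀, -, hx₀⟩ := Finset.exists_max_image Finset.univ (w i)
      ⟨Classical.arbitrary V, Finset.mem_univ _⟩
    set M := w i x₀ with hM
    have hstep : ∀ x, w i x = M → ∀ y, G.Adj x y → w i y = M := by
      intro x hx y hxy
      have hsum0 : ∑ z, P x z * (M - w i z) = 0 := by
        have hx' : ∑ z, P x z * w i z = w i x := congrFun hPwi x
        have hexpand : ∑ z, P x z * (M - w i z)
            = (∑ z, P x z) * M - ∑ z, P x z * w i z := by
          rw [Finset.sum_mul, ← Finset.sum_sub_distrib]
          exact Finset.sum_congr rfl fun z _ => by ring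
        rw [hexpand, hrow, hx', hx, one_mul, sub_self]
      have hnn : ∀ z ∈ Finset.univ, 0 ≤ P x z * (M - w i z) := by
        intro z _
        have hP0 : 0 ≤ P x z := by rw [hP]; split <;> positivity
        have hle : w i z ≤ M := hx₀ z (Finset.mem_univ z)
        exact mul_nonneg hP0 (by linarith)
      have hz := (Finset.sum_eq_zero_iff_of_nonneg hnn).1 hsum0 y (Finset.mem_univ y)
      have hPxy : 0 < P x y := by
        rw [hP, if_pos hxy, one_div]
        exact inv_pos.2 (hdegpos x)
      rcases mul_eq_zero.1 hz with h | h
      · exact absurd h hPxy.ne'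
      · linarith
    have hwalk : ∀ (a b : V), (p : G.Walk a b) → w i a = M → w i b = M := by
      intro a b p
      induction p with
      | nil => exact fun h => h
      | cons hadj' p ih => exact fun ha => ih (hstep _ ha _ hadj')
    have hconst : ∀ x, w i x = M := fun x =>
      hwalk x₀ x (hconn.preconnected x₀ x).some rfl
    have hvz : ∀ z, v i z = s z * M := by
      intro z
      rw [← hvw i, hDh, Matrix.mulVec_diagonal, hconst z]
    have hcinner : c i = ∑ z, v i z * (s z * f z) := by
      show hherm.eigenvectorBasis.repr uE i = _
      rw [hherm.eigenvectorBasis.repr_apply_apply uE i]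
      rw [show (inner ℝ (hherm.eigenvectorBasis i) uE : ℝ)
        = ∑ z, v i z * uE z from by
          rw [PiLp.inner_apply]
          exact Finset.sum_congr rfl fun z _ => by simp [hv, mul_comm]]
      refine Finset.sum_congr rfl fun z _ => ?_
      rw [show (uE : V → ℝ) z = (Dh.mulVec f) z from rfl, hDh, Matrix.mulVec_diagonal]
    rw [hcinner]
    have : ∑ z, v i z * (s z * f z) = M * ∑ z, d z * f z := by
      rw [Finset.mul_sum]
      refine Finset.sum_congr rfl fun z _ => ?_
      rw [hvz z, ← hss z]
      ring
    rw [this, show ∑ z, d z * f z = 0 from hf, mul_zero]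
  -- pointwise formula for the semigroup
  have hptw : ∀ (t : ℝ) (x : V),
      ((NormedSpace.exp (t • Q)).mulVec f) x = ∑ i, c i * (Real.exp (t * μ i) * w i x) := by
    intro t x
    have hfv : f = ∑ i, c i • w i := by
      funext z
      rw [hfd z, Finset.sum_apply]
      simp [smul_eq_mul]
    have hexpw : ∀ i, (NormedSpace.exp (t • Q)).mulVec (w i)
        = Real.exp (t * μ i) • w i := by
      intro i
      refine exp_mulVec_eigen _ _ _ ?_
      rw [Matrix.smul_mulVec, hQw i, smul_smul]
    calc ((NormedSpace.exp (t • Q)).mulVec f) x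
        = ((NormedSpace.exp (t • Q)).mulVecLin (∑ i, c i • w i)) x := by
          rw [← hfv]; rfl
      _ = (∑ i, c i • (NormedSpace.exp (t • Q)).mulVec (w i)) x := by
          rw [map_sum]
          refine congrFun (Finset.sum_congr rfl fun i _ => ?_) x
          rw [_root_.map_smul]; rfl
      _ = ∑ i, c i * (Real.exp (t * μ i) * w i x) := by
          rw [Finset.sum_apply]
          exact Finset.sum_congr rfl fun i _ => by rw [hexpw i]; simp [smul_eq_mul]
  -- integrability
  have hint : ∀ i x, IntegrableOn (fun t : ℝ => c i * (Real.exp (t * μ i) * w i x))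
      (Set.Ici (0 : ℝ)) volume := by
    intro i x
    rcases eq_or_lt_of_le (hμle i) with h0 | hneg
    · have : c i = 0 := hc0 i h0
      simp [this]
    · have hb : 0 < -μ i := by linarith
      have h2 : IntegrableOn (fun t : ℝ => c i * w i x * Real.exp (-(-μ i) * t))
          (Set.Ioi (0 : ℝ)) volume :=
        (exp_neg_integrableOn_Ioi (0 : ℝ) hb).const_mul (c i * w i x)
      have h3 := (integrableOn_Ici_iff_integrableOn_Ioi).mpr h2
      refine h3.congr_fun (fun t _ => ?_) measurableSet_Ici
      beta_reduce; rw [neg_neg, mul_comm (μ i) t]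
      ring
  have hIntAll : ∀ x : V, IntegrableOn (fun t : ℝ => ((NormedSpace.exp (t • Q)).mulVec f) x)
      (Set.Ici (0 : ℝ)) volume := by
    intro x
    have : IntegrableOn (fun t : ℝ => ∑ i, c i * (Real.exp (t * μ i) * w i x))
        (Set.Ici (0 : ℝ)) volume := integrable_finset_sum _ fun i _ => hint i x
    exact this.congr_fun (fun t _ => (hptw t x).symm) measurableSet_Ici
  refine ⟨hIntAll, ?_⟩
  -- compute g
  set κ : V → ℝ := fun i => if μ i = 0 then 0 else -c i / μ i with hκ
  have hJ : ∀ i, μ i < 0 → (∫ t in Set.Ici (0 : ℝ), Real.exp (t * μ i)) = -1 / μ i := by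
    intro i hneg
    rw [MeasureTheory.integral_Ici_eq_integral_Ioi]
    have hderiv : ∀ t ∈ Set.Ici (0 : ℝ),
        HasDerivAt (fun t : ℝ => Real.exp (t * μ i) / μ i) (Real.exp (t * μ i)) t := by
      intro t _
      have h1 : HasDerivAt (fun t : ℝ => t * μ i) (μ i) t := hasDerivAt_mul_const (μ i)
      have h2 := (Real.hasDerivAt_exp (t * μ i)).comp t h1
      have h3 := h2.div_const (μ i)
      simpa [mul_div_assoc, mul_div_cancel_right₀ _ hneg.ne] using h3
    have hintegr : IntegrableOn (fun t : ℝ => Real.exp (t * μ i)) (Set.Ioi 0) volume := by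
      have hb : 0 < -μ i := by linarith
      refine (exp_neg_integrableOn_Ioi (0 : ℝ) hb).congr_fun (fun t _ => ?_) measurableSet_Ioi
      beta_reduce; rw [neg_neg, mul_comm (μ i) t]
    have htend : Filter.Tendsto (fun t : ℝ => Real.exp (t * μ i) / μ i)
        Filter.atTop (nhds 0) := by
      have h1 : Filter.Tendsto (fun t : ℝ => t * μ i) Filter.atTop Filter.atBot :=
        (Filter.tendsto_mul_const_atBot_of_neg hneg).2 Filter.tendsto_id
      have h2 := Real.tendsto_exp_atBot.comp h1
      have h3 := h2.div_const (μ i)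
      simpa using h3
    have := integral_Ioi_of_hasDerivAt_of_tendsto' hderiv hintegr htend
    rw [this]
    simp [neg_div]
  have hgx : ∀ x, g x = ∑ i, κ i * w i x := by
    intro x
    rw [hg x]
    rw [setIntegral_congr_fun measurableSet_Ici (fun t _ => hptw t x)]
    rw [integral_finset_sum _ fun i _ => hint i x]
    refine Finset.sum_congr rfl fun i _ => ?_
    rcases eq_or_lt_of_le (hμle i) with h0 | hneg
    · have hci : c i = 0 := hc0 i h0
      simp [hκ, h0, hci]
    · have : (∫ t in Set.Ici (0 : ℝ), c i * (Real.exp (t * μ i) * w i x))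
          = (c i * w i x) * ∫ t in Set.Ici (0 : ℝ), Real.exp (t * μ i) := by
        rw [← integral_const_mul]
        exact setIntegral_congr_fun measurableSet_Ici fun t _ => by ring
      have hμne : μ i ≠ 0 := hneg.ne
      rw [this, hJ i hneg, show κ i = -c i / μ i from by rw [hκ]; simp [hμne]]
      field_simp
  -- final identity
  have hQg : ∀ x, (Q.mulVec g) x = -f x := by
    intro x
    have hgv : g = ∑ i, κ i • w i := by
      funext z
      rw [hgx z, Finset.sum_apply]
      simp [smul_eq_mul]
    have : Q.mulVec g = ∑ i, (κ i * μ i) • w i := by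
      calc Q.mulVec g = Q.mulVecLin (∑ i, κ i • w i) := by rw [← hgv]; rfl
        _ = ∑ i, κ i • Q.mulVec (w i) := by
            rw [map_sum]
            exact Finset.sum_congr rfl fun i _ => by rw [_root_.map_smul]; rfl
        _ = ∑ i, (κ i * μ i) • w i := by
            exact Finset.sum_congr rfl fun i _ => by rw [hQw i, smul_smul]
    rw [this, Finset.sum_apply]
    have hterm : ∀ i, (κ i * μ i) = -c i := by
      intro i
      rcases eq_or_ne (μ i) 0 with h0 | hne
      · simp [hκ, h0, hc0 i h0]
      · rw [hκ]; simp only [hne, if_neg hne, if_false]; field_simp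
    rw [hfd x, ← Finset.sum_neg_distrib]
    refine Finset.sum_congr rfl fun i _ => ?_
    rw [Pi.smul_apply, smul_eq_mul, hterm i]
    ring
  intro x
  have hPg : (P.mulVec g) x = (1 / d x) * ∑ y ∈ G.neighborFinset x, g y := by
    have h1 : (P.mulVec g) x = ∑ y, (if G.Adj x y then (1 / d x) * g y else 0) := by
      refine Finset.sum_congr rfl fun y _ => ?_
      show P x y * g y = _
      rw [hP x y]
      split <;> simp [hd]
    rw [h1, ← Finset.sum_filter, ← SimpleGraph.neighborFinset_eq_filter, Finset.mul_sum]
  have h1 := hQg x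
  rw [hQ, Matrix.sub_mulVec, Matrix.one_mulVec, Pi.sub_apply] at h1
  have : g x - (1 / d x) * ∑ y ∈ G.neighborFinset x, g y = f x := by
    rw [← hPg]; linarith
  exact this
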